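/- Stability preservation for multivariate polynomials: if f is a stable polynomial in M complex variables (f has no roots z with Im(z_m) > 0 for all m) and ∂f/∂z_m is not identically zero, then ∂f/∂z_m is stable. -/

import Mathlib

open Filter

def SeparatelyConvex {M : ℕ} (K : Set (Fin M → ℂ)) : Prop :=
  ∀ (m : Fin M) (z : Fin M → ℂ), Convex ℝ {w : ℂ | Function.update z m w ∈ K}

def sepConvexHull {M : ℕ} (A : Set (Fin M → ℂ)) : Set (Fin M → ℂ) :=
  ⋂₀ {K : Set (Fin M → ℂ) | SeparatelyConvex K ∧ A ⊆ K}

/-- Partial derivative of `f` in the `m`-th coordinate at `z`. -/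
noncomputable def pd {M : ℕ} (f : (Fin M → ℂ) → ℂ) (m : Fin M) (z : Fin M → ℂ) : ℂ :=
  deriv (fun w => f (Function.update z m w)) (z m)

open Polynomial
-- Coefficient bound for polynomials nonvanishing on a ball centered at 0.
lemma coeff_bound {q : Polynomial ℂ} {δ : NNReal}
    (hq : ∀ x : ℂ, ‖x‖₊ < δ → q.eval x ≠ 0) (k : ℕ) :
    ‖q.coeff k‖₊ * δ ^ k ≤ (q.natDegree.choose k) * ‖q.coeff 0‖₊ := by
  rcases eq_or_ne q 0 with rfl | hq0
  · simp
  rcases lt_or_ge q.natDegree k with hk | hk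
  · simp [Polynomial.coeff_eq_zero_of_natDegree_lt hk]
  set n := q.natDegree
  have hcard : Multiset.card q.roots = n :=
    Polynomial.splits_iff_card_roots.mp (IsAlgClosed.splits q)
  set S := q.roots with hS
  have hroot_norm : ∀ r ∈ S, δ ≤ ‖r‖₊ := by
    intro r hr
    by_contra h
    exact hq r (lt_of_not_ge h) ((Polynomial.mem_roots hq0).mp hr)
  -- product of all root norms
  set Pi : NNReal := (S.map (fun r => ‖r‖₊)).prod with hPi
  have hterm : ∀ T ∈ S.powersetCard (n - k), (T.map (fun r => ‖r‖₊)).prod * δ ^ k ≤ Pi := by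
    intro T hT
    obtain ⟨hTS, hTcard⟩ := Multiset.mem_powersetCard.mp hT
    have hAB : (T.map (fun r => ‖r‖₊)) ≤ (S.map (fun r => ‖r‖₊)) :=
      Multiset.map_le_map hTS
    have hsplit : (S.map (fun r => ‖r‖₊)) - (T.map (fun r => ‖r‖₊)) + (T.map (fun r => ‖r‖₊))
        = S.map (fun r => ‖r‖₊) := tsub_add_cancel_of_le hAB
    have hcard2 : Multiset.card ((S.map (fun r => ‖r‖₊)) - (T.map (fun r => ‖r‖₊))) = k := by
      rw [Multiset.card_sub hAB]
      simp [hTcard, hcard, Nat.sub_sub_self hk]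
    have hdelta : δ ^ k ≤ ((S.map (fun r => ‖r‖₊)) - (T.map (fun r => ‖r‖₊))).prod := by
      rw [← hcard2]
      apply Multiset.pow_card_le_prod
      intro x hx
      have hxS : x ∈ S.map (fun r => ‖r‖₊) :=
        Multiset.mem_of_le (Multiset.sub_le_self _ _) hx
      obtain ⟨r, hrS, rfl⟩ := Multiset.mem_map.mp hxS
      exact hroot_norm r hrS
    calc (T.map (fun r => ‖r‖₊)).prod * δ ^ k
        ≤ (T.map (fun r => ‖r‖₊)).prod * ((S.map (fun r => ‖r‖₊)) - (T.map (fun r => ‖r‖₊))).prod := by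
          exact mul_le_mul_right hdelta _
      _ = Pi := by
          rw [hPi, ← hsplit, Multiset.prod_add, mul_comm]; rw [add_tsub_cancel_right]
  have hprodnorm : ∀ (T : Multiset ℂ), ‖T.prod‖₊ = (T.map fun r => ‖r‖₊).prod := fun T => by
    simpa [Function.comp] using map_multiset_prod (nnnormHom.toMonoidHom : ℂ →* NNReal) T
  have hcoeffk : q.coeff k = q.leadingCoeff * (-1) ^ (n - k) * S.esymm (n - k) :=
    Polynomial.coeff_eq_esymm_roots_of_card hcard hk
  have hfact := Polynomial.C_leadingCoeff_mul_prod_multiset_X_sub_C hcard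
  have heval0 : q.eval 0 = q.leadingCoeff * (S.map (fun a => (0 : ℂ) - a)).prod := by
    conv_lhs => rw [← hfact]
    rw [Polynomial.eval_mul, Polynomial.eval_C, Polynomial.eval_multiset_prod, Multiset.map_map]
    refine congrArg (q.leadingCoeff * ·) (congrArg (Multiset.prod (M := ℂ)) (Multiset.map_congr rfl ?_))
    intro r _
    simp
  have hnegprod : (Multiset.map ((fun r => ‖r‖₊) ∘ fun a => (0:ℂ) - a) S).prod = Pi := by
    rw [hPi]
    refine congrArg (Multiset.prod (M := NNReal)) (Multiset.map_congr rfl ?_)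
    intro r _
    simp
  have hcoeff0 : ‖q.coeff 0‖₊ = ‖q.leadingCoeff‖₊ * Pi := by
    rw [Polynomial.coeff_zero_eq_eval_zero, heval0, nnnorm_mul, hprodnorm, Multiset.map_map,
      hnegprod]
  have hesymm : ‖S.esymm (n - k)‖₊ * δ ^ k ≤ (n.choose k) * Pi := by
    have h1 : ‖S.esymm (n - k)‖₊ ≤
        ((S.powersetCard (n - k)).map (fun T => (T.map (fun r => ‖r‖₊)).prod)).sum := by
      rw [Multiset.esymm]
      refine le_trans (nnnorm_multiset_sum_le _) (le_of_eq ?_)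
      rw [Multiset.map_map]
      apply congrArg
      apply Multiset.map_congr rfl
      intro T _
      exact hprodnorm T
    calc ‖S.esymm (n - k)‖₊ * δ ^ k
        ≤ ((S.powersetCard (n - k)).map (fun T => (T.map (fun r => ‖r‖₊)).prod)).sum * δ ^ k :=
          mul_le_mul_left h1 _
      _ = ((S.powersetCard (n - k)).map (fun T => (T.map (fun r => ‖r‖₊)).prod * δ ^ k)).sum := by
          rw [Multiset.sum_map_mul_right]
      _ ≤ (Multiset.card ((S.powersetCard (n - k)).map
            (fun T => (T.map (fun r => ‖r‖₊)).prod * δ ^ k))) • Pi := by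
          apply Multiset.sum_le_card_nsmul
          intro x hx
          obtain ⟨T, hT, rfl⟩ := Multiset.mem_map.mp hx
          exact hterm T hT
      _ = (n.choose k) * Pi := by
          rw [Multiset.card_map, Multiset.card_powersetCard, hcard, Nat.choose_symm hk,
            nsmul_eq_mul]
  calc ‖q.coeff k‖₊ * δ ^ k
      = ‖q.leadingCoeff‖₊ * (‖S.esymm (n - k)‖₊ * δ ^ k) := by
        rw [hcoeffk]
        rw [nnnorm_mul, nnnorm_mul]
        have : ‖((-1 : ℂ)) ^ (n - k)‖₊ = 1 := by simp
        rw [this, mul_one, mul_assoc]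
    _ ≤ ‖q.leadingCoeff‖₊ * ((n.choose k) * Pi) := mul_le_mul_right hesymm _
    _ = (n.choose k) * ‖q.coeff 0‖₊ := by rw [hcoeff0]; ring

lemma prod_ne_zero_and_ratio {a : ℂ} (ha : 0 < a.im) :
    ∀ (S : Multiset ℂ), (∀ r ∈ S, r.im ≤ 0) →
      Polynomial.eval a ((S.map fun r => X - C r).prod) ≠ 0 ∧
      (S ≠ 0 → (Polynomial.eval a (derivative ((S.map fun r => X - C r).prod)) *
        (Polynomial.eval a ((S.map fun r => X - C r).prod))⁻¹).im < 0) := by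
  intro S
  induction S using Multiset.induction_on with
  | empty => intro _; simp
  | cons r S ih =>
    intro hroots
    have hr : r.im ≤ 0 := hroots r (Multiset.mem_cons_self r S)
    have hS : ∀ x ∈ S, x.im ≤ 0 := fun x hx => hroots x (Multiset.mem_cons_of_mem hx)
    obtain ⟨hP, hD⟩ := ih hS
    have har : a - r ≠ 0 := by
      intro h
      have : (a - r).im = 0 := by rw [h]; rfl
      simp only [Complex.sub_im] at this
      linarith
    have harim : 0 < (a - r).im := by simp only [Complex.sub_im]; linarith
    have hinv : ((a - r)⁻¹).im < 0 := by
      rw [Complex.inv_im]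
      apply div_neg_of_neg_of_pos
      · linarith
      · exact Complex.normSq_pos.mpr har
    set P := (S.map fun r => X - C r).prod with hPdef
    have hprod : ((r ::ₘ S).map fun r => X - C r).prod = (X - C r) * P := by
      rw [Multiset.map_cons, Multiset.prod_cons]
    constructor
    · rw [hprod, Polynomial.eval_mul]
      simp only [Polynomial.eval_sub, Polynomial.eval_X, Polynomial.eval_C]
      exact mul_ne_zero har hP
    · intro _
      rw [hprod]
      have hder : derivative ((X - C r) * P) = P + (X - C r) * derivative P := by
        rw [derivative_mul, derivative_sub, derivative_X, derivative_C, sub_zero, one_mul]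
      rw [hder]
      simp only [Polynomial.eval_add, Polynomial.eval_mul, Polynomial.eval_sub,
        Polynomial.eval_X, Polynomial.eval_C]
      have hkey : (Polynomial.eval a P + (a - r) * Polynomial.eval a (derivative P)) *
          ((a - r) * Polynomial.eval a P)⁻¹
          = (a - r)⁻¹ + Polynomial.eval a (derivative P) * (Polynomial.eval a P)⁻¹ := by
        field_simp
      rw [hkey]
      rcases eq_or_ne S 0 with rfl | hS0
      · simp only [hPdef, Multiset.map_zero, Multiset.prod_zero, derivative_one,
          Polynomial.eval_zero, zero_mul, add_zero]
        exact hinv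
      · have := hD hS0
        rw [Complex.add_im]
        linarith

lemma gauss_lucas {g : Polynomial ℂ} (hg : ∀ w : ℂ, 0 < w.im → g.eval w ≠ 0)
    (hdeg : 1 ≤ g.natDegree) {a : ℂ} (ha : 0 < a.im) :
    (derivative g).eval a ≠ 0 := by
  have hg0 : g ≠ 0 := fun h => hg Complex.I (by simp) (by simp [h])
  have hcard : Multiset.card g.roots = g.natDegree :=
    Polynomial.splits_iff_card_roots.mp (IsAlgClosed.splits g)
  have hroots : ∀ r ∈ g.roots, r.im ≤ 0 := by
    intro r hr
    by_contra h
    exact hg r (lt_of_not_ge h) ((Polynomial.mem_roots hg0).mp hr)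
  have hfact := Polynomial.C_leadingCoeff_mul_prod_multiset_X_sub_C hcard
  obtain ⟨hP, hD⟩ := prod_ne_zero_and_ratio ha g.roots hroots
  have hS0 : g.roots ≠ 0 := by
    intro h
    rw [h] at hcard
    simp at hcard
    omega
  have hD' := hD hS0
  have hDne : Polynomial.eval a (derivative ((g.roots.map fun r => X - C r).prod)) ≠ 0 := by
    intro h
    rw [h, zero_mul] at hD'
    simp at hD'
  have hlc : g.leadingCoeff ≠ 0 := Polynomial.leadingCoeff_ne_zero.mpr hg0
  conv_lhs => rw [← hfact]
  rw [derivative_mul, derivative_C, zero_mul, zero_add, Polynomial.eval_mul, Polynomial.eval_C]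
  exact mul_ne_zero hlc hDne

lemma nat_choose_le_two_pow (n k : ℕ) : n.choose k ≤ 2 ^ n := by
  rcases le_or_gt k n with h | h
  · calc n.choose k ≤ ∑ m ∈ Finset.range (n + 1), n.choose m :=
        Finset.single_le_sum (fun i _ => Nat.zero_le _) (Finset.mem_range.mpr (by omega))
    _ = 2 ^ n := Nat.sum_range_choose n
  · rw [Nat.choose_eq_zero_of_lt h]; exact Nat.zero_le _

lemma aeval_line_eval {N : ℕ} (z' v : Fin N → ℂ) (p : MvPolynomial (Fin N) ℂ) (ε : ℂ) :
    Polynomial.eval ε ((MvPolynomial.aeval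
        (fun k => Polynomial.C (z' k) + Polynomial.C (v k) * Polynomial.X) :
        MvPolynomial (Fin N) ℂ →ₐ[ℂ] Polynomial ℂ) p)
      = MvPolynomial.eval (fun k => z' k + ε * v k) p := by
  induction p using MvPolynomial.induction_on with
  | C a => simp [MvPolynomial.algebraMap_eq]
  | add p q hp hq => simp [hp, hq]
  | mul_X p i hp =>
    rw [map_mul, Polynomial.eval_mul, hp]
    simp only [MvPolynomial.aeval_X, Polynomial.eval_add, Polynomial.eval_mul,
      Polynomial.eval_C, Polynomial.eval_X, map_mul, MvPolynomial.eval_X]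
    ring

lemma leadCoeff_stable {N : ℕ} (F : Polynomial (MvPolynomial (Fin N) ℂ)) (hF : F ≠ 0)
    (hst : ∀ z' : Fin N → ℂ, (∀ k, 0 < (z' k).im) → ∀ w : ℂ, 0 < w.im →
      Polynomial.eval w (F.map (MvPolynomial.eval z')) ≠ 0)
    (z' : Fin N → ℂ) (hz' : ∀ k, 0 < (z' k).im) :
    MvPolynomial.eval z' F.leadingCoeff ≠ 0 := by
  intro hlc0
  have hlc : F.leadingCoeff ≠ 0 := Polynomial.leadingCoeff_ne_zero.mpr hF
  -- a point where the leading coefficient does not vanish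
  have hy : ∃ y : Fin N → ℂ, MvPolynomial.eval y F.leadingCoeff ≠ 0 := by
    by_contra h
    push_neg at h
    exact hlc (MvPolynomial.funext (fun x => by simp [h x]))
  obtain ⟨y, hy⟩ := hy
  set v : Fin N → ℂ := fun k => y k - z' k with hv
  -- radius so that the line stays in the upper half space
  obtain ⟨δ, hδpos, hδ⟩ : ∃ δ : ℝ, 0 < δ ∧ ∀ (ε : ℂ), ‖ε‖ < δ → ∀ k, 0 < (z' k + ε * v k).im := by
    rcases isEmpty_or_nonempty (Fin N) with hN | hN
    · exact ⟨1, one_pos, fun ε _ k => (hN.false k).elim⟩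
    · refine ⟨Finset.univ.inf' Finset.univ_nonempty (fun k => (z' k).im / (‖v k‖ + 1)), ?_, ?_⟩
      · rw [Finset.lt_inf'_iff]
        intro k _
        apply div_pos (hz' k)
        positivity
      · intro ε hε k
        have h1 : ‖ε‖ < (z' k).im / (‖v k‖ + 1) :=
          lt_of_lt_of_le hε (Finset.inf'_le _ (Finset.mem_univ k))
        have h2 : ‖ε‖ * (‖v k‖ + 1) < (z' k).im := by
          rw [lt_div_iff₀ (by positivity)] at h1
          exact h1
        have h3 : |(ε * v k).im| ≤ ‖ε‖ * ‖v k‖ := by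
          calc |(ε * v k).im| ≤ ‖ε * v k‖ := Complex.abs_im_le_norm _
            _ = ‖ε‖ * ‖v k‖ := norm_mul _ _
        have h4 : ‖ε‖ * ‖v k‖ < (z' k).im := by nlinarith [norm_nonneg ε, norm_nonneg (v k)]
        have h5 : -((z' k).im) < (ε * v k).im := by
          have := abs_le.mp h3
          linarith
        simp only [Complex.add_im]
        linarith
  set ψ : MvPolynomial (Fin N) ℂ →ₐ[ℂ] Polynomial ℂ :=
    MvPolynomial.aeval (fun k => Polynomial.C (z' k) + Polynomial.C (v k) * Polynomial.X) with hψ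
  set n := F.natDegree with hn
  set P : ℕ → Polynomial ℂ := fun j => ψ (F.coeff j) with hP
  set w : ℕ → ℂ := fun t => ((t : ℂ) + 1) * Complex.I with hw
  have hwim : ∀ t, 0 < (w t).im := by
    intro t
    simp only [hw, Complex.mul_im, Complex.add_re, Complex.natCast_re, Complex.one_re,
      Complex.I_im, Complex.add_im, Complex.natCast_im, Complex.one_im, Complex.I_re,
      mul_one, mul_zero, add_zero]
    positivity
  have hwnorm : ∀ t : ℕ, ‖w t‖ = (t : ℝ) + 1 := by
    intro t
    rw [hw]
    simp only [norm_mul, Complex.norm_I, mul_one]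
    rw [show ((t : ℂ) + 1) = ((t + 1 : ℕ) : ℂ) by push_cast; ring, Complex.norm_natCast]
    push_cast
    ring
  have hwne : ∀ t : ℕ, w t ≠ 0 := by
    intro t h
    have := hwnorm t
    rw [h, norm_zero] at this
    have : (0:ℝ) < (t:ℝ) + 1 := by positivity
    linarith
  set q : ℕ → Polynomial ℂ := fun t =>
    ∑ j ∈ Finset.range (n + 1), Polynomial.C ((w t) ^ j) * P j with hq
  -- evaluation identity
  have heval : ∀ (t : ℕ) (ε : ℂ), (q t).eval ε =
      Polynomial.eval (w t) (F.map (MvPolynomial.eval (fun k => z' k + ε * v k))) := by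
    intro t ε
    rw [Polynomial.eval_map, Polynomial.eval₂_eq_sum_range, hq]
    rw [Polynomial.eval_finset_sum]
    apply Finset.sum_congr rfl
    intro j _
    rw [Polynomial.eval_mul, Polynomial.eval_C, hP]
    simp only []
    rw [aeval_line_eval]
    ring
  -- nonvanishing on the ball
  have hqne : ∀ (t : ℕ) (ε : ℂ), ‖ε‖ < δ → (q t).eval ε ≠ 0 := by
    intro t ε hε
    rw [heval]
    exact hst _ (hδ ε hε) _ (hwim t)
  -- coefficient formula
  have hqcoeff : ∀ (t : ℕ) (k : ℕ), (q t).coeff k =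
      ∑ j ∈ Finset.range (n + 1), (w t) ^ j * (P j).coeff k := by
    intro t k
    rw [hq, Polynomial.finset_sum_coeff]
    apply Finset.sum_congr rfl
    intro j _
    rw [Polynomial.coeff_C_mul]
  -- degree bound
  set D : ℕ := (Finset.range (n + 1)).sup (fun j => (P j).natDegree) with hD
  have hqdeg : ∀ t, (q t).natDegree ≤ D := by
    intro t
    rw [hq]
    apply Polynomial.natDegree_sum_le_of_forall_le
    intro j hj
    calc (Polynomial.C ((w t) ^ j) * P j).natDegree ≤ (P j).natDegree :=
        Polynomial.natDegree_C_mul_le _ _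
      _ ≤ D := Finset.le_sup (f := fun j => (P j).natDegree) hj
  -- the real inequality from coeff_bound
  set δn : NNReal := δ.toNNReal with hδn
  have hineq : ∀ (t : ℕ) (k : ℕ),
      ‖(q t).coeff k / (w t) ^ n‖ * δ ^ k ≤ (2 ^ D : ℝ) * ‖(q t).coeff 0 / (w t) ^ n‖ := by
    intro t k
    have hball : ∀ x : ℂ, ‖x‖₊ < δn → (q t).eval x ≠ 0 := by
      intro x hx
      apply hqne t
      have : (‖x‖₊ : ℝ) < (δn : ℝ) := NNReal.coe_lt_coe.mpr hx
      rw [coe_nnnorm] at this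
      calc ‖x‖ < (δn : ℝ) := this
        _ ≤ δ := by rw [hδn, Real.coe_toNNReal _ hδpos.le]
    have hcb := coeff_bound hball k
    have hcb' : ‖(q t).coeff k‖ * δ ^ k ≤ ((q t).natDegree.choose k : ℝ) * ‖(q t).coeff 0‖ := by
      have h0 := NNReal.coe_le_coe.mpr hcb
      have hδeq : ((δn : ℝ)) = δ := by rw [hδn, Real.coe_toNNReal _ hδpos.le]
      push_cast [coe_nnnorm, hδeq] at h0
      exact h0
    have hchoose : ((q t).natDegree.choose k : ℝ) ≤ (2 ^ D : ℝ) := by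
      have h1 : (q t).natDegree.choose k ≤ 2 ^ (q t).natDegree := nat_choose_le_two_pow _ _
      have h2 : (2:ℕ) ^ (q t).natDegree ≤ 2 ^ D := Nat.pow_le_pow_right (by norm_num) (hqdeg t)
      exact_mod_cast le_trans h1 h2
    have hwpow : (0:ℝ) < ‖(w t) ^ n‖ := by
      rw [norm_pow, hwnorm]
      positivity
    have hfinal : ‖(q t).coeff k‖ * δ ^ k ≤ (2 ^ D : ℝ) * ‖(q t).coeff 0‖ :=
      le_trans hcb' (mul_le_mul_of_nonneg_right hchoose (norm_nonneg _))
    rw [norm_div, norm_div]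
    calc ‖(q t).coeff k‖ / ‖(w t) ^ n‖ * δ ^ k
        = (‖(q t).coeff k‖ * δ ^ k) / ‖(w t) ^ n‖ := by ring
      _ ≤ ((2 ^ D : ℝ) * ‖(q t).coeff 0‖) / ‖(w t) ^ n‖ := by gcongr
      _ = (2 ^ D : ℝ) * (‖(q t).coeff 0‖ / ‖(w t) ^ n‖) := by ring
  -- the limit of the normalized coefficients
  have hPn0 : (P n).coeff 0 = 0 := by
    rw [Polynomial.coeff_zero_eq_eval_zero, hP]
    simp only []
    rw [aeval_line_eval]
    have : (fun k => z' k + 0 * v k) = z' := by funext k; ring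
    rw [this, hn, Polynomial.coeff_natDegree]
    exact hlc0
  have hPn1 : (P n).eval 1 ≠ 0 := by
    rw [hP]
    simp only []
    rw [aeval_line_eval]
    have : (fun k => z' k + 1 * v k) = y := by funext k; simp [hv]
    rw [this, hn, Polynomial.coeff_natDegree]
    exact hy
  have hconv : ∀ k, Tendsto (fun t => (q t).coeff k / (w t) ^ n) atTop
      (nhds ((P n).coeff k)) := by
    intro k
    have hsum : ∀ t, (q t).coeff k / (w t) ^ n =
        ∑ j ∈ Finset.range (n + 1), (P j).coeff k * ((w t) ^ j / (w t) ^ n) := by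
      intro t
      rw [hqcoeff, Finset.sum_div]
      apply Finset.sum_congr rfl
      intro j _
      ring
    have hlim : Tendsto (fun t => ∑ j ∈ Finset.range (n + 1),
        (P j).coeff k * ((w t) ^ j / (w t) ^ n)) atTop (nhds ((P n).coeff k)) := by
      have hsum2 : ((P n).coeff k) = ∑ j ∈ Finset.range (n + 1),
          (if j = n then (P n).coeff k else 0) := by
        rw [Finset.sum_ite_eq' (Finset.range (n + 1)) n (fun _ => (P n).coeff k)]
        simp
      rw [hsum2]
      apply tendsto_finset_sum
      intro j hj
      rcases eq_or_ne j n with hjn | hjn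
      · rw [hjn]
        simp only [if_pos rfl]
        have : ∀ t, (P n).coeff k * ((w t) ^ n / (w t) ^ n) = (P n).coeff k := by
          intro t
          rw [div_self (pow_ne_zero _ (hwne t)), mul_one]
        exact Tendsto.congr (fun t => (this t).symm) tendsto_const_nhds
      · simp only [if_neg hjn]
        have hjlt : j < n := by
          have := Finset.mem_range.mp hj
          omega
        rw [tendsto_zero_iff_norm_tendsto_zero]
        have hbound : ∀ t : ℕ, ‖(P j).coeff k * ((w t) ^ j / (w t) ^ n)‖ ≤
            ‖(P j).coeff k‖ * (1 / ((t : ℝ) + 1)) := by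
          intro t
          rw [norm_mul, norm_div, norm_pow, norm_pow, hwnorm]
          apply mul_le_mul_of_nonneg_left _ (norm_nonneg _)
          rw [div_le_div_iff₀ (by positivity) (by positivity), one_mul]
          calc ((t:ℝ) + 1) ^ j * ((t:ℝ) + 1) = ((t:ℝ) + 1) ^ (j + 1) := by ring
            _ ≤ ((t:ℝ) + 1) ^ n := by
              apply pow_le_pow_right₀ (by linarith [Nat.cast_nonneg (α := ℝ) t]) (by omega)
        have hto : Tendsto (fun t : ℕ => ‖(P j).coeff k‖ * (1 / ((t : ℝ) + 1))) atTop
            (nhds 0) := by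
          have := tendsto_one_div_add_atTop_nhds_zero_nat (𝕜 := ℝ)
          have h2 := this.const_mul ‖(P j).coeff k‖
          simpa using h2
        exact squeeze_zero (fun t => norm_nonneg _) hbound hto
    exact Tendsto.congr (fun t => (hsum t).symm) hlim
  have hk0 : ∀ k, ‖(P n).coeff k‖ * δ ^ k ≤ 0 := by
    intro k
    have hA : Tendsto (fun t => ‖(q t).coeff k / (w t) ^ n‖ * δ ^ k) atTop
        (nhds (‖(P n).coeff k‖ * δ ^ k)) := ((hconv k).norm).mul_const _
    have hB : Tendsto (fun t => (2 ^ D : ℝ) * ‖(q t).coeff 0 / (w t) ^ n‖) atTop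
        (nhds ((2 ^ D : ℝ) * ‖(P n).coeff 0‖)) := ((hconv 0).norm).const_mul _
    rw [hPn0, norm_zero, mul_zero] at hB
    exact le_of_tendsto_of_tendsto' hA hB (fun t => hineq t k)
  have hPnz : P n = 0 := by
    apply Polynomial.ext
    intro k
    have h1 := hk0 k
    have h2 : (0:ℝ) < δ ^ k := pow_pos hδpos k
    have h3 : ‖(P n).coeff k‖ ≤ 0 := by nlinarith [norm_nonneg ((P n).coeff k)]
    simpa using norm_le_zero_iff.mp h3
  rw [hPnz] at hPn1
  simp at hPn1

lemma finSuccEquiv_pderiv_zero {N : ℕ} (f : MvPolynomial (Fin (N+1)) ℂ) :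
    MvPolynomial.finSuccEquiv ℂ N (MvPolynomial.pderiv 0 f)
      = Polynomial.derivative (MvPolynomial.finSuccEquiv ℂ N f) := by
  induction f using MvPolynomial.induction_on with
  | C a =>
    rw [MvPolynomial.pderiv_C, map_zero, MvPolynomial.finSuccEquiv_apply,
      MvPolynomial.eval₂Hom_C, RingHom.comp_apply, Polynomial.derivative_C]
  | add p q hp hq => simp [hp, hq]
  | mul_X p i hp =>
    rw [MvPolynomial.pderiv_mul, map_add, map_mul, map_mul, hp,
      map_mul (MvPolynomial.finSuccEquiv ℂ N), Polynomial.derivative_mul]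
    rcases Fin.eq_zero_or_eq_succ i with rfl | ⟨j, rfl⟩
    · rw [MvPolynomial.finSuccEquiv_X_zero]
      simp only [MvPolynomial.pderiv_X_self, map_one, Polynomial.derivative_X]
    · rw [MvPolynomial.finSuccEquiv_X_succ]
      have : MvPolynomial.pderiv (0 : Fin (N+1)) (MvPolynomial.X j.succ : MvPolynomial (Fin (N+1)) ℂ) = 0 := by
        exact MvPolynomial.pderiv_X_of_ne (Fin.succ_ne_zero j)
      rw [this]
      simp [Polynomial.derivative_C]

theorem mv_polynomial_stability_preservation {M : ℕ} (f : MvPolynomial (Fin M) ℂ)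
    (hstable : ∀ z : Fin M → ℂ, (∀ k, 0 < (z k).im) → MvPolynomial.eval z f ≠ 0)
    (m : Fin M) (hm : MvPolynomial.pderiv m f ≠ 0)
    (z : Fin M → ℂ) (hz : ∀ k, 0 < (z k).im) :
    MvPolynomial.eval z (MvPolynomial.pderiv m f) ≠ 0 := by
  cases M with
  | zero => exact m.elim0
  | succ N =>
    set e := Equiv.swap m 0 with he_def
    have he : ∀ k, e (e k) = k := fun k => Equiv.swap_apply_self m 0 k
    set f' := MvPolynomial.rename (⇑e) f with hf'
    set u := z ∘ ⇑e with hu_def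
    have hu : ∀ k, 0 < (u k).im := fun k => hz (e k)
    have hpd : MvPolynomial.pderiv 0 f' = MvPolynomial.rename (⇑e) (MvPolynomial.pderiv m f) := by
      have h := MvPolynomial.pderiv_rename e.injective m f
      rw [Equiv.swap_apply_left] at h
      exact h
    have hgoal : MvPolynomial.eval u (MvPolynomial.pderiv 0 f')
        = MvPolynomial.eval z (MvPolynomial.pderiv m f) := by
      rw [hpd, MvPolynomial.eval_rename]
      have hue : u ∘ ⇑e = z := by
        funext k
        simp [hu_def, Function.comp, he]
      rw [hue]
    rw [← hgoal]
    have hst' : ∀ z0 : Fin (N+1) → ℂ, (∀ k, 0 < (z0 k).im) → MvPolynomial.eval z0 f' ≠ 0 := by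
      intro z0 hz0
      rw [hf', MvPolynomial.eval_rename]
      exact hstable _ (fun k => hz0 (e k))
    have hm' : MvPolynomial.pderiv (0 : Fin (N+1)) f' ≠ 0 := by
      rw [hpd]
      intro h
      apply hm
      apply MvPolynomial.rename_injective (⇑e) e.injective
      rw [h, map_zero]
    set F := MvPolynomial.finSuccEquiv ℂ N f' with hF
    have hFst : ∀ z' : Fin N → ℂ, (∀ k, 0 < (z' k).im) → ∀ w : ℂ, 0 < w.im →
        Polynomial.eval w (F.map (MvPolynomial.eval z')) ≠ 0 := by
      intro z' hz'' w hw
      rw [hF, ← MvPolynomial.eval_eq_eval_mv_eval']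
      apply hst'
      intro k
      refine Fin.cases ?_ ?_ k
      · simpa using hw
      · intro j
        simpa using hz'' j
    have hF0 : F ≠ 0 := by
      intro h
      have hz0 : f' = 0 := by
        have := (MvPolynomial.finSuccEquiv ℂ N).injective
          (a₁ := f') (a₂ := 0) (by rw [← hF, h]; simp)
        exact this
      rw [hz0] at hm'
      simp at hm'
    have hder : MvPolynomial.finSuccEquiv ℂ N (MvPolynomial.pderiv 0 f')
        = Polynomial.derivative F := by
      rw [hF]
      exact finSuccEquiv_pderiv_zero f'
    have hn1 : 1 ≤ F.natDegree := by
      by_contra h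
      push_neg at h
      have h0 : F.natDegree = 0 := by omega
      have hd0 : Polynomial.derivative F = 0 := by
        rw [Polynomial.eq_C_of_natDegree_eq_zero h0]
        simp
      rw [← hder] at hd0
      apply hm'
      have := (MvPolynomial.finSuccEquiv ℂ N).injective
        (a₁ := MvPolynomial.pderiv 0 f') (a₂ := 0) (by rw [hd0]; simp)
      exact this
    set z' := Fin.tail u with hz'def
    set w0 := u 0 with hw0def
    have hz'' : ∀ k, 0 < (z' k).im := fun k => hu k.succ
    have hw0 : 0 < w0.im := hu 0
    have hlead := leadCoeff_stable F hF0 hFst z' hz''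
    set g := F.map (MvPolynomial.eval z') with hg
    have hgdeg : g.natDegree = F.natDegree :=
      Polynomial.natDegree_map_of_leadingCoeff_ne_zero _ hlead
    have hgst : ∀ w : ℂ, 0 < w.im → g.eval w ≠ 0 := fun w hw => hFst z' hz'' w hw
    have hGL := gauss_lucas hgst (by omega) hw0
    have hcons : Fin.cons w0 z' = u := Fin.cons_self_tail u
    have hfinal : MvPolynomial.eval u (MvPolynomial.pderiv 0 f')
        = Polynomial.eval w0 (Polynomial.derivative g) := by
      rw [← hcons, MvPolynomial.eval_eq_eval_mv_eval', hder, hg, Polynomial.derivative_map]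
    rw [hfinal]
    exact hGL
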